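/- Any deterministic finite-state algorithm that maintains, within additive error RWε, the sum of the last W elements of a stream of integers in {0,…,R} has at least |C|^W states, where C = { n·⌊2RWε+1⌋ : n ∈ {0,…,⌊1/(2Wε + 1/R)⌋} }; hence it requires at least W·log₂⌊1/(4Wε)+1⌋ bits of memory. -/

import Mathlib

/-- Any deterministic finite-state algorithm maintaining, within additive
error `R·W·ε`, the sum of the last `W` elements of a stream over `{0,…,R}` has at least
`|C| ^ W` states, where `|C| = ⌊1/(2Wε + 1/R)⌋ + 1` (the set
`C = { n·⌊2RWε+1⌋ : n ∈ {0,…,⌊1/(2Wε + 1/R)⌋} }`); hence (whenever `ε ≥ 1/(2RW)`, so that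
`⌊1/(4Wε)⌋ + 1 ≤ |C|`) it requires at least `W·log₂⌊1/(4Wε) + 1⌋` bits of memory. -/
theorem stmt_3 (W R : ℕ) (ε : ℝ) (hW : 0 < W) (hR : 0 < R) (hε : 0 < ε)
    (S : Type*) [Fintype S] (s₀ : S) (δ : S → Fin (R + 1) → S) (q : S → ℝ)
    (hcorrect : ∀ w : List (Fin (R + 1)), W ≤ w.length →
      |q (w.foldl δ s₀) - (((w.drop (w.length - W)).map (fun a => (a : ℕ))).sum : ℝ)|
        ≤ (R : ℝ) * W * ε) :
    (⌊1 / (2 * (W : ℝ) * ε + 1 / (R : ℝ))⌋₊ + 1) ^ W ≤ Fintype.card S ∧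
      (1 / (2 * (R : ℝ) * W) ≤ ε →
        (W : ℝ) * Real.logb 2 ((⌊1 / (4 * (W : ℝ) * ε)⌋₊ : ℝ) + 1)
          ≤ Real.logb 2 (Fintype.card S)) := by
  have hRpos : (0 : ℝ) < R := by exact_mod_cast hR
  have hWpos : (0 : ℝ) < W := by exact_mod_cast hW
  -- normalize the funny elaboration of the window sum
  have hform : ∀ l : List (Fin (R + 1)),
      (l.map (fun a => (a : ℕ))).sum = (l.map Fin.val).sum := by
    intro l
    induction l with
    | nil => rfl
    | cons x xs ih => simpa using ih
  set g : ℕ := ⌊2 * (R : ℝ) * W * ε + 1⌋₊ with hgdef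
  set M : ℕ := ⌊1 / (2 * (W : ℝ) * ε + 1 / (R : ℝ))⌋₊ + 1 with hMdef
  have hgpos : 0 < g := by
    rw [hgdef, Nat.floor_pos]
    nlinarith [mul_pos (mul_pos (mul_pos (by norm_num : (0:ℝ) < 2) hRpos) hWpos) hε]
  have hglt : 2 * (R : ℝ) * W * ε < g := by
    have := Nat.sub_one_lt_floor (2 * (R : ℝ) * W * ε + 1)
    simpa using this
  have hden : (0 : ℝ) < 2 * (W : ℝ) * ε + 1 / (R : ℝ) := by positivity
  -- letters `n * g` are at most `R`
  have hle : ∀ n : ℕ, n < M → n * g ≤ R := by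
    intro n hn
    have h1 : (n : ℝ) ≤ 1 / (2 * (W : ℝ) * ε + 1 / (R : ℝ)) := by
      have : n ≤ ⌊1 / (2 * (W : ℝ) * ε + 1 / (R : ℝ))⌋₊ := by omega
      calc (n : ℝ) ≤ (⌊1 / (2 * (W : ℝ) * ε + 1 / (R : ℝ))⌋₊ : ℝ) := by exact_mod_cast this
        _ ≤ _ := Nat.floor_le (by positivity)
    have h2 : (g : ℝ) ≤ 2 * (R : ℝ) * W * ε + 1 := Nat.floor_le (by positivity)
    have h3 : (n : ℝ) * (2 * (W : ℝ) * ε + 1 / (R : ℝ)) ≤ 1 := (le_div_iff₀ hden).mp h1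
    have key : (n : ℝ) * g ≤ R := by
      have h5 := mul_le_mul_of_nonneg_left h3 hRpos.le
      rw [mul_one] at h5
      have hinv : (R : ℝ) * (1 / (R : ℝ)) = 1 := mul_one_div_cancel (ne_of_gt hRpos)
      have h7 : (n : ℝ) * ((R : ℝ) * (1 / (R : ℝ))) = n := by rw [hinv, mul_one]
      have h8 : (n : ℝ) * g ≤ (n : ℝ) * (2 * (R : ℝ) * W * ε + 1) :=
        mul_le_mul_of_nonneg_left h2 (by positivity)
      nlinarith [h5, h7, h8]
    exact_mod_cast key
  -- the injection
  set letter : Fin M → Fin (R + 1) := fun n => ⟨n.val * g, by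
    have := hle n.val n.isLt; omega⟩ with hletter
  set word : (Fin W → Fin M) → List (Fin (R + 1)) :=
    fun a => List.ofFn (fun j => letter (a j)) with hword
  have hwlen : ∀ a, (word a).length = W := fun a => List.length_ofFn
  set f : (Fin W → Fin M) → S := fun a => (word a).foldl δ s₀ with hf
  -- window-sum fact for `word a ++ replicate t 0`
  have hwindow : ∀ (a : Fin W → Fin M) (t : ℕ), t ≤ W →
      |q (List.foldl δ (f a) (List.replicate t (0 : Fin (R + 1))))
        - ((((word a).drop t).map Fin.val).sum : ℝ)| ≤ (R : ℝ) * W * ε := by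
    intro a t ht
    have hlen : W ≤ (word a ++ List.replicate t (0 : Fin (R + 1))).length := by
      simp [hwlen]
    have hc := hcorrect (word a ++ List.replicate t (0 : Fin (R + 1))) hlen
    rw [hform] at hc
    have hdroplen : (word a ++ List.replicate t (0 : Fin (R + 1))).length - W = t := by
      simp [hwlen]
    rw [hdroplen, List.foldl_append] at hc
    rw [List.drop_append, hwlen] at hc
    have ht0 : t - W = 0 := by omega
    rw [ht0, List.drop_zero, List.map_append, List.sum_append] at hc
    have hz : ((List.replicate t (0 : Fin (R + 1))).map Fin.val).sum = 0 := by
      simp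
    rw [hz] at hc
    simpa [hf] using hc
  -- divisibility of window sums by g
  have hdvd : ∀ (a : Fin W → Fin M) (t : ℕ),
      g ∣ (((word a).drop t).map Fin.val).sum := by
    intro a t
    apply List.dvd_sum
    intro x hx
    rw [List.mem_map] at hx
    obtain ⟨y, hy, rfl⟩ := hx
    have hy' := List.mem_of_mem_drop hy
    rw [hword, List.mem_ofFn] at hy'
    obtain ⟨j, rfl⟩ := hy'
    have hv : ((fun j => letter (a j)) j : Fin (R + 1)).val = (a j).val * g := rfl
    rw [hv]
    exact dvd_mul_left g ((a j).val)
  have hinj : Function.Injective f := by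
    intro a b hab
    -- equal window sums at every cut
    have key : ∀ t, t ≤ W →
        (((word a).drop t).map Fin.val).sum = (((word b).drop t).map Fin.val).sum := by
      intro t ht
      have h1 := hwindow a t ht
      have h2 := hwindow b t ht
      rw [hab] at h1
      set s := List.foldl δ (f b) (List.replicate t (0 : Fin (R + 1))) with hs
      set A := (((word a).drop t).map Fin.val).sum with hA
      set B := (((word b).drop t).map Fin.val).sum with hB
      have habs : |(A : ℝ) - B| < g := by
        have hsum : |(A : ℝ) - B| ≤ 2 * (R : ℝ) * W * ε := by
          calc |(A : ℝ) - B| ≤ |(A : ℝ) - q s| + |q s - (B : ℝ)| := abs_sub_le _ _ _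
            _ = |q s - (A : ℝ)| + |q s - (B : ℝ)| := by rw [abs_sub_comm (A : ℝ)]
            _ ≤ (R : ℝ) * W * ε + (R : ℝ) * W * ε := add_le_add h1 h2
            _ = 2 * (R : ℝ) * W * ε := by ring
        linarith
      have hZ : ((A : ℤ) - B) = 0 := by
        apply Int.eq_zero_of_abs_lt_dvd
        · exact dvd_sub (Int.natCast_dvd_natCast.mpr (hdvd a t))
            (Int.natCast_dvd_natCast.mpr (hdvd b t))
        · have : |((A : ℤ) - B : ℤ)| < (g : ℤ) := by
            have h := habs
            rw [← Int.cast_natCast A, ← Int.cast_natCast B, ← Int.cast_sub,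
              ← Int.cast_abs] at h
            exact_mod_cast h
          exact this
      omega
    funext k
    have hk1 := key k.val (le_of_lt k.isLt)
    have hk2 := key (k.val + 1) k.isLt
    have hka : (k : ℕ) < (word a).length := by rw [hwlen]; exact k.isLt
    have hkb : (k : ℕ) < (word b).length := by rw [hwlen]; exact k.isLt
    have hda : (word a).drop k.val = letter (a k) :: (word a).drop (k.val + 1) := by
      rw [List.drop_eq_getElem_cons hka]
      simp [hword, List.getElem_ofFn]
    have hdb : (word b).drop k.val = letter (b k) :: (word b).drop (k.val + 1) := by
      rw [List.drop_eq_getElem_cons hkb]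
      simp [hword, List.getElem_ofFn]
    rw [hda, hdb, List.map_cons, List.map_cons, List.sum_cons, List.sum_cons, hk2] at hk1
    have hval : (a k).val * g = (b k).val * g := by
      simpa [hletter] using hk1
    exact Fin.ext (Nat.eq_of_mul_eq_mul_right hgpos hval)
  have hcard : M ^ W ≤ Fintype.card S := by
    have := Fintype.card_le_of_injective f hinj
    rwa [Fintype.card_fun, Fintype.card_fin, Fintype.card_fin] at this
  refine ⟨hcard, ?_⟩
  intro hεR
  have hMle : (⌊1 / (4 * (W : ℝ) * ε)⌋₊ : ℝ) + 1 ≤ (M : ℝ) := by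
    have : ⌊1 / (4 * (W : ℝ) * ε)⌋₊ ≤ ⌊1 / (2 * (W : ℝ) * ε + 1 / (R : ℝ))⌋₊ := by
      apply Nat.floor_le_floor
      apply one_div_le_one_div_of_le hden
      have h1R : 1 / (R : ℝ) ≤ 2 * (W : ℝ) * ε := by
        rw [div_le_iff₀ hRpos]
        rw [div_le_iff₀ (by positivity : (0:ℝ) < 2 * (R : ℝ) * W)] at hεR
        nlinarith
      nlinarith
    rw [hMdef]
    push_cast
    exact_mod_cast Nat.add_le_add_right this 1
  have hfl0 : (0 : ℝ) ≤ (⌊1 / (4 * (W : ℝ) * ε)⌋₊ : ℝ) := Nat.cast_nonneg _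
  have hx1 : (0 : ℝ) < (⌊1 / (4 * (W : ℝ) * ε)⌋₊ : ℝ) + 1 := by linarith
  have hMpos : (0 : ℝ) < M := by
    rw [hMdef]; push_cast; positivity
  have hcardpos : 0 < Fintype.card S := by
    have : 1 ≤ M ^ W := Nat.one_le_pow _ _ (by rw [hMdef]; omega)
    omega
  have hcardposR : (0 : ℝ) < (Fintype.card S : ℝ) := by exact_mod_cast hcardpos
  calc (W : ℝ) * Real.logb 2 ((⌊1 / (4 * (W : ℝ) * ε)⌋₊ : ℝ) + 1)
      ≤ (W : ℝ) * Real.logb 2 (M : ℝ) := by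
        apply mul_le_mul_of_nonneg_left _ hWpos.le
        exact (Real.logb_le_logb (by norm_num) hx1 hMpos).mpr hMle
    _ = Real.logb 2 ((M : ℝ) ^ W) := by rw [Real.logb_pow]
    _ ≤ Real.logb 2 (Fintype.card S) := by
        apply (Real.logb_le_logb (by norm_num) (by positivity) hcardposR).mpr
        calc ((M : ℝ) ^ W) = ((M ^ W : ℕ) : ℝ) := by push_cast; ring
          _ ≤ (Fintype.card S : ℝ) := by exact_mod_cast hcard
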